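/- Let A = (A1 A2) ∈ ℝ^{m×n} with A1 ∈ ℝ^{m×k}, A2 ∈ ℝ^{m×(n−k)}, let k = rank(A1), and let r be an integer with k ≤ r ≤ min{m,n}. Then the matrix Ã2 = P_{A1}(A2) + H_{r−k}(P⊥_{A1}(A2)) satisfies rank(A1 Ã2) ≤ r and ‖A2 − Ã2‖_F ≤ ‖A2 − X2‖_F for every X2 ∈ ℝ^{m×(n−k)} with rank(A1 X2) ≤ r; that is, (A1 Ã2) solves the constrained low rank approximation problem min{‖(A1 A2) − (A1 X2)‖_F² : rank(A1 X2) ≤ r}. -/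

import Mathlib

set_option synthInstance.maxHeartbeats 1000000
set_option maxHeartbeats 1600000

open Matrix Filter Topology

noncomputable def frob {α β : Type*} [Fintype α] [Fintype β] (M : Matrix α β ℝ) : ℝ :=
  Real.sqrt (∑ i, ∑ j, (M i j) ^ 2)

noncomputable def projCol {m k : ℕ} (B : Matrix (Fin m) (Fin k) ℝ) :
    Matrix (Fin m) (Fin m) ℝ :=
  B * (Bᵀ * B)⁻¹ * Bᵀ

/-- The `p × q` diagonal matrix whose `(i,i)` entry is the `(i+1)`-st value of `σ`
(singular values are indexed starting from `1`, as in the paper). -/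
def svdDiag (p q : ℕ) (σ : ℕ → ℝ) : Matrix (Fin p) (Fin q) ℝ :=
  Matrix.of fun i j => if (i : ℕ) = (j : ℕ) then σ ((i : ℕ) + 1) else 0

/-- `svdDiag` truncated to its `r` leading (largest) singular values. -/
def svdTrunc (p q r : ℕ) (σ : ℕ → ℝ) : Matrix (Fin p) (Fin q) ℝ :=
  Matrix.of fun i j => if (i : ℕ) = (j : ℕ) ∧ (i : ℕ) < r then σ ((i : ℕ) + 1) else 0

/-- `M = U * Σ * Vᵀ` is a singular value decomposition of `M`, with singular values
`σ 1 ≥ σ 2 ≥ ⋯ ≥ 0` arranged in non-increasing order. -/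
structure IsSVD {p q : ℕ} (M : Matrix (Fin p) (Fin q) ℝ)
    (U : Matrix (Fin p) (Fin p) ℝ) (σ : ℕ → ℝ) (V : Matrix (Fin q) (Fin q) ℝ) : Prop where
  hUl : Uᵀ * U = 1
  hUr : U * Uᵀ = 1
  hVl : Vᵀ * V = 1
  hVr : V * Vᵀ = 1
  hM : M = U * svdDiag p q σ * Vᵀ
  anti : ∀ i j : ℕ, 1 ≤ i → i ≤ j → σ j ≤ σ i
  nonneg : ∀ i : ℕ, 1 ≤ i → 0 ≤ σ i

namespace GHS
open Module

noncomputable def frobSq {α β : Type*} [Fintype α] [Fintype β] (M : Matrix α β ℝ) : ℝ :=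
  ∑ i, ∑ j, (M i j) ^ 2

lemma frob_eq {α β : Type*} [Fintype α] [Fintype β] (M : Matrix α β ℝ) :
    frob M = Real.sqrt (frobSq M) := rfl

lemma frobSq_nonneg {α β : Type*} [Fintype α] [Fintype β] (M : Matrix α β ℝ) :
    0 ≤ frobSq M :=
  Finset.sum_nonneg fun _ _ => Finset.sum_nonneg fun _ _ => sq_nonneg _

lemma frob_le_frob {α β : Type*} [Fintype α] [Fintype β] (M N : Matrix α β ℝ)
    (h : frobSq M ≤ frobSq N) : frob M ≤ frob N := by
  rw [frob_eq, frob_eq]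
  exact Real.sqrt_le_sqrt h

lemma frobSq_eq_trace {α β : Type*} [Fintype α] [Fintype β] (M : Matrix α β ℝ) :
    frobSq M = (Mᵀ * M).trace := by
  rw [frobSq, Matrix.trace, Finset.sum_comm]
  refine Finset.sum_congr rfl fun j _ => ?_
  simp [Matrix.diag, Matrix.mul_apply, sq]

lemma frobSq_transpose {α β : Type*} [Fintype α] [Fintype β] (M : Matrix α β ℝ) :
    frobSq Mᵀ = frobSq M := by
  rw [frobSq, frobSq, Finset.sum_comm]
  simp [Matrix.transpose_apply]

lemma frobSq_unit_left {p q : ℕ} (U : Matrix (Fin p) (Fin p) ℝ) (M : Matrix (Fin p) (Fin q) ℝ)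
    (hU : Uᵀ * U = 1) : frobSq (U * M) = frobSq M := by
  rw [frobSq_eq_trace, frobSq_eq_trace, transpose_mul]
  simp only [Matrix.mul_assoc]
  rw [← Matrix.mul_assoc Uᵀ U M, hU, Matrix.one_mul]

lemma frobSq_unit_right {p q : ℕ} (M : Matrix (Fin p) (Fin q) ℝ) (V : Matrix (Fin q) (Fin q) ℝ)
    (hV : Vᵀ * V = 1) : frobSq (M * Vᵀ) = frobSq M := by
  rw [frobSq_eq_trace, frobSq_eq_trace, transpose_mul, transpose_transpose]
  simp only [Matrix.mul_assoc]
  rw [Matrix.trace_mul_comm]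
  simp only [Matrix.mul_assoc]
  rw [hV, Matrix.mul_one]

lemma pythagoras {p q : ℕ} (P : Matrix (Fin p) (Fin p) ℝ) (C : Matrix (Fin p) (Fin q) ℝ)
    (hPt : Pᵀ = P) (hPP : P * P = P) :
    frobSq C = frobSq (P * C) + frobSq ((1 - P) * C) := by
  have hQt : (1 - P)ᵀ = 1 - P := by rw [transpose_sub, transpose_one, hPt]
  have hsum : Pᵀ * P + (1 - P)ᵀ * (1 - P) = 1 := by
    rw [hPt, hQt, hPP, sub_mul, one_mul, mul_sub, mul_one, hPP]
    abel
  have hC : Pᵀ * (P * C) + (1 - P)ᵀ * ((1 - P) * C) = C := by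
    rw [← Matrix.mul_assoc, ← Matrix.mul_assoc, ← Matrix.add_mul, hsum, Matrix.one_mul]
  rw [frobSq_eq_trace, frobSq_eq_trace, frobSq_eq_trace, transpose_mul, transpose_mul]
  simp only [Matrix.mul_assoc]
  rw [← Matrix.trace_add, ← Matrix.mul_add, hC]

lemma frobSq_mul_proj_le {p q : ℕ} (C : Matrix (Fin p) (Fin q) ℝ)
    (R : Matrix (Fin q) (Fin q) ℝ) (hRt : Rᵀ = R) (hRR : R * R = R) :
    frobSq (C * R) ≤ frobSq C := by
  have h := pythagoras R Cᵀ hRt hRR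
  have h2 : frobSq (C * R) = frobSq (R * Cᵀ) := by
    rw [← frobSq_transpose (C * R), transpose_mul, hRt]
  rw [h2]
  have h3 := frobSq_nonneg ((1 - R) * Cᵀ)
  rw [← frobSq_transpose C]
  linarith

lemma sum_fin_delta {m : ℕ} (t : ℕ) (c : ℝ) :
    (∑ i : Fin m, if (i : ℕ) = t then c else 0) = if t < m then c else 0 := by
  rcases Nat.lt_or_ge t m with h | h
  · rw [if_pos h, Finset.sum_eq_single (⟨t, h⟩ : Fin m)]
    · simp
    · intro b _ hb
      exact if_neg fun hbt => hb (Fin.ext hbt)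
    · simp
  · rw [if_neg (not_lt.mpr h)]
    refine Finset.sum_eq_zero fun i _ => if_neg fun hit => ?_
    exact absurd (hit ▸ i.isLt) (not_lt.mpr h)

lemma frobSq_diagLike {m l : ℕ} (e : ℕ → ℝ) :
    frobSq (Matrix.of fun (i : Fin m) (j : Fin l) => if (i : ℕ) = (j : ℕ) then e (i : ℕ) else 0)
      = ∑ j : Fin l, if (j : ℕ) < m then (e (j : ℕ)) ^ 2 else 0 := by
  rw [frobSq, Finset.sum_comm]
  refine Finset.sum_congr rfl fun j _ => ?_
  have h : ∀ i : Fin m,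
      ((Matrix.of fun (i : Fin m) (j : Fin l) =>
        if (i : ℕ) = (j : ℕ) then e (i : ℕ) else 0) i j) ^ 2
        = if (i : ℕ) = (j : ℕ) then (e (j : ℕ)) ^ 2 else 0 := by
    intro i
    by_cases hij : (i : ℕ) = (j : ℕ) <;> simp [hij]
  simp_rw [h]
  exact sum_fin_delta _ _

lemma sum_indicator_lt {l : ℕ} (s : ℕ) (hsl : s ≤ l) (c : ℝ) :
    ∑ j : Fin l, (if (j : ℕ) < s then c else 0) = s * c := by
  rw [Fin.sum_univ_eq_sum_range (fun j => if j < s then c else 0)]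
  have h : ∀ j ∈ Finset.range l, (if j < s then c else 0) = if j ∈ Finset.range s then c else 0 := by
    intro j _; simp [Finset.mem_range]
  rw [Finset.sum_congr rfl h, Finset.sum_ite_mem,
    Finset.inter_eq_right.mpr (Finset.range_subset_range.mpr hsl), Finset.sum_const,
    Finset.card_range, nsmul_eq_mul]

lemma major {l : ℕ} (s : ℕ) (hsl : s ≤ l) (d p : Fin l → ℝ)
    (hd : ∀ i j : Fin l, i ≤ j → d j ≤ d i) (hd0 : ∀ j, 0 ≤ d j)
    (hp0 : ∀ j, 0 ≤ p j) (hp1 : ∀ j, p j ≤ 1) (hps : (l : ℝ) - s ≤ ∑ j, p j) :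
    ∑ j : Fin l, (if s ≤ (j : ℕ) then d j else 0) ≤ ∑ j : Fin l, d j * p j := by
  rcases Nat.lt_or_ge s l with h | h
  · set t := d ⟨s, h⟩ with ht
    have ht0 : 0 ≤ t := hd0 _
    have step : ∀ j : Fin l,
        t * p j - (if s ≤ (j : ℕ) then t else 0) ≤ d j * p j - (if s ≤ (j : ℕ) then d j else 0) := by
      intro j
      by_cases hj : s ≤ (j : ℕ)
      · rw [if_pos hj, if_pos hj]
        have hdj : d j ≤ t := hd ⟨s, h⟩ j (by simpa [Fin.le_def] using hj)
        nlinarith [hp1 j, hp0 j]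
      · rw [if_neg hj, if_neg hj]
        have hdj : t ≤ d j := hd j ⟨s, h⟩ (by simp [Fin.le_def]; omega)
        nlinarith [hp0 j]
    have hsum := Finset.sum_le_sum (fun j (_ : j ∈ Finset.univ) => step j)
    rw [Finset.sum_sub_distrib, Finset.sum_sub_distrib] at hsum
    have hind : ∑ j : Fin l, (if s ≤ (j : ℕ) then t else 0)
        = (l : ℝ) * t - s * t := by
      have hjj : ∀ j : Fin l, (if s ≤ (j : ℕ) then t else 0)
          = t - (if (j : ℕ) < s then t else 0) := by
        intro j
        by_cases hj : s ≤ (j : ℕ)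
        · simp [hj, Nat.not_lt.mpr hj]
        · have hj' : (j : ℕ) < s := Nat.not_le.mp hj
          simp [hj, hj']
      simp_rw [hjj]
      rw [Finset.sum_sub_distrib, sum_indicator_lt s (le_of_lt h) t, Finset.sum_const,
        Finset.card_univ, Fintype.card_fin, nsmul_eq_mul]
    have htp : ∑ j : Fin l, t * p j = t * ∑ j, p j := by rw [Finset.mul_sum]
    have hge : t * ((l : ℝ) - s) ≤ t * ∑ j, p j := mul_le_mul_of_nonneg_left hps ht0
    rw [hind, htp] at hsum
    nlinarith
  · have hz : ∀ j : Fin l, (if s ≤ (j : ℕ) then d j else 0) = 0 := by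
      intro j; exact if_neg (by omega)
    simp_rw [hz]
    rw [Finset.sum_const, smul_zero]
    exact Finset.sum_nonneg fun j _ => mul_nonneg (hd0 j) (hp0 j)

lemma matrix_rank_add_le {α β : Type*} [Fintype α] [Fintype β]
    (A B : Matrix α β ℝ) : (A + B).rank ≤ A.rank + B.rank := by
  classical
  have hle : LinearMap.range (A + B).mulVecLin ≤
      LinearMap.range A.mulVecLin ⊔ LinearMap.range B.mulVecLin := by
    rintro x ⟨v, rfl⟩
    refine Submodule.mem_sup.2 ⟨A *ᵥ v, ⟨v, rfl⟩, B *ᵥ v, ⟨v, rfl⟩, ?_⟩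
    simp [Matrix.mulVecLin_apply, Matrix.add_mulVec]
  calc (A + B).rank ≤ finrank ℝ ↥(LinearMap.range A.mulVecLin ⊔ LinearMap.range B.mulVecLin) :=
        Submodule.finrank_mono hle
    _ ≤ A.rank + B.rank := Submodule.finrank_add_le_finrank_add_finrank _ _

lemma rank_fromCols_zero_left {m k l : ℕ} (B : Matrix (Fin m) (Fin l) ℝ) :
    (Matrix.fromCols (0 : Matrix (Fin m) (Fin k) ℝ) B).rank = B.rank := by
  refine le_antisymm ?_ ?_
  · have h : Matrix.fromCols (0 : Matrix (Fin m) (Fin k) ℝ) B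
        = B * Matrix.fromCols (0 : Matrix (Fin l) (Fin k) ℝ) (1 : Matrix (Fin l) (Fin l) ℝ) := by
      rw [Matrix.mul_fromCols, Matrix.mul_zero, Matrix.mul_one]
    rw [h]
    exact Matrix.rank_mul_le_left _ _
  · have h : B = Matrix.fromCols (0 : Matrix (Fin m) (Fin k) ℝ) B *
        Matrix.fromRows (0 : Matrix (Fin k) (Fin l) ℝ) (1 : Matrix (Fin l) (Fin l) ℝ) := by
      rw [Matrix.fromCols_mul_fromRows, Matrix.zero_mul, Matrix.mul_one, zero_add]
    conv_lhs => rw [h]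
    exact Matrix.rank_mul_le_left _ _

lemma rank_svdTrunc_le (p q s : ℕ) (σ : ℕ → ℝ) : (svdTrunc p q s σ).rank ≤ s := by
  classical
  set F : Matrix (Fin p) (Fin s) ℝ :=
    Matrix.of fun i a => if (i : ℕ) = (a : ℕ) then σ ((i : ℕ) + 1) else 0 with hF
  set G : Matrix (Fin s) (Fin q) ℝ :=
    Matrix.of fun a j => if (a : ℕ) = (j : ℕ) then (1 : ℝ) else 0 with hG
  have hFG : svdTrunc p q s σ = F * G := by
    ext i j
    rw [Matrix.mul_apply]
    have h : ∀ a : Fin s, F i a * G a j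
        = if (a : ℕ) = (i : ℕ) then (if (i : ℕ) = (j : ℕ) then σ ((i : ℕ) + 1) else 0) else 0 := by
      intro a
      simp only [hF, hG, Matrix.of_apply]
      by_cases h1 : (i : ℕ) = (a : ℕ)
      · rw [if_pos h1, if_pos h1.symm]
        by_cases h2 : (a : ℕ) = (j : ℕ)
        · rw [if_pos h2, if_pos (h1.trans h2), mul_one]
        · rw [if_neg h2, if_neg (fun hc => h2 (h1.symm.trans hc)), mul_zero]
      · rw [if_neg h1, zero_mul, if_neg (fun hc : (a : ℕ) = (i : ℕ) => h1 hc.symm)]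
    simp_rw [h, sum_fin_delta]
    simp only [svdTrunc, Matrix.of_apply]
    by_cases h1 : (i : ℕ) < s <;> by_cases h2 : (i : ℕ) = (j : ℕ) <;> simp [h1, h2]
  rw [hFG]
  exact le_trans (Matrix.rank_mul_le_left F G) (le_trans F.rank_le_card_width (by simp))

lemma gram_isUnit {m k : ℕ} (A1 : Matrix (Fin m) (Fin k) ℝ) (hrank : A1.rank = k) :
    IsUnit (A1ᵀ * A1) := by
  have hr : (A1ᵀ * A1).rank = k := by rw [Matrix.rank_transpose_mul_self, hrank]
  rw [← Matrix.mulVec_surjective_iff_isUnit]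
  have htop : LinearMap.range (A1ᵀ * A1).mulVecLin = ⊤ := by
    apply Submodule.eq_top_of_finrank_eq
    rw [← Matrix.rank, hr, Module.finrank_fintype_fun_eq_card, Fintype.card_fin]
  intro v
  have hv : v ∈ LinearMap.range (A1ᵀ * A1).mulVecLin := htop ▸ Submodule.mem_top
  obtain ⟨w, hw⟩ := hv
  exact ⟨w, hw⟩

lemma projCol_props {m k : ℕ} (A1 : Matrix (Fin m) (Fin k) ℝ) (hrank : A1.rank = k) :
    (projCol A1)ᵀ = projCol A1 ∧ projCol A1 * projCol A1 = projCol A1 ∧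
      projCol A1 * A1 = A1 := by
  have hu := gram_isUnit A1 hrank
  have hdet : IsUnit (A1ᵀ * A1).det := (Matrix.isUnit_iff_isUnit_det _).1 hu
  have hinv : (A1ᵀ * A1)⁻¹ * (A1ᵀ * A1) = 1 := Matrix.nonsing_inv_mul _ hdet
  have hPA1 : projCol A1 * A1 = A1 := by
    rw [projCol, Matrix.mul_assoc, Matrix.mul_assoc A1, hinv, Matrix.mul_one]
  refine ⟨?_, ?_, hPA1⟩
  · rw [projCol, Matrix.transpose_mul, Matrix.transpose_mul, Matrix.transpose_transpose,
      Matrix.transpose_nonsing_inv, Matrix.transpose_mul, Matrix.transpose_transpose,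
      ← Matrix.mul_assoc]
  · rw [projCol]
    simp only [Matrix.mul_assoc]
    rw [← Matrix.mul_assoc A1ᵀ A1, ← Matrix.mul_assoc ((A1ᵀ * A1)⁻¹) (A1ᵀ * A1), hinv,
      Matrix.one_mul]

lemma rank_fromCols_ge {m k l : ℕ} (A1 : Matrix (Fin m) (Fin k) ℝ)
    (X2 : Matrix (Fin m) (Fin l) ℝ) (Q : Matrix (Fin m) (Fin m) ℝ)
    (hQA1 : Q * A1 = 0) (hrank : A1.rank = k) :
    k + (Q * X2).rank ≤ (Matrix.fromCols A1 X2).rank := by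
  classical
  set M := Matrix.fromCols A1 X2 with hMdef
  set f := Q.mulVecLin with hf
  set W := LinearMap.range M.mulVecLin with hW
  have hrn := LinearMap.finrank_range_add_finrank_ker (f.domRestrict W)
  have hrange : LinearMap.range (f.domRestrict W) = W.map f := LinearMap.range_domRestrict W f
  have hker : LinearMap.ker (f.domRestrict W) = (LinearMap.ker f).comap W.subtype :=
    LinearMap.ker_domRestrict W f
  have hcomap : (LinearMap.ker f).comap W.subtype = (W ⊓ LinearMap.ker f).comap W.subtype := by
    ext x
    simp [Submodule.mem_comap, x.2]
  have hk2 : finrank ℝ (LinearMap.ker (f.domRestrict W))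
      = finrank ℝ ↥(W ⊓ LinearMap.ker f) := by
    rw [hker, hcomap]
    exact (Submodule.comapSubtypeEquivOfLe (inf_le_left : W ⊓ LinearMap.ker f ≤ W)).finrank_eq
  have hmap : LinearMap.range (Q * M).mulVecLin = W.map f := by
    rw [Matrix.mulVecLin_mul, LinearMap.range_comp]
  have hQM : Q * M = Matrix.fromCols (0 : Matrix (Fin m) (Fin k) ℝ) (Q * X2) := by
    rw [hMdef, Matrix.mul_fromCols, hQA1]
  have hmapRank : finrank ℝ (W.map f) = (Q * X2).rank := by
    rw [← hmap, ← Matrix.rank, hQM, rank_fromCols_zero_left]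
  have hA1W : LinearMap.range A1.mulVecLin ≤ W := by
    have hfac : A1 = M * Matrix.fromRows (1 : Matrix (Fin k) (Fin k) ℝ)
        (0 : Matrix (Fin l) (Fin k) ℝ) := by
      rw [hMdef, Matrix.fromCols_mul_fromRows, Matrix.mul_one, Matrix.mul_zero, add_zero]
    rw [hfac, Matrix.mulVecLin_mul]
    exact LinearMap.range_comp_le_range _ _
  have hA1ker : LinearMap.range A1.mulVecLin ≤ LinearMap.ker f := by
    rintro x ⟨v, rfl⟩
    simp only [hf, LinearMap.mem_ker, Matrix.mulVecLin_apply, Matrix.mulVec_mulVec, hQA1]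
    exact Matrix.zero_mulVec v
  have hkfin : k ≤ finrank ℝ ↥(W ⊓ LinearMap.ker f) := by
    calc k = A1.rank := hrank.symm
      _ ≤ finrank ℝ ↥(W ⊓ LinearMap.ker f) :=
        Submodule.finrank_mono (le_inf hA1W hA1ker)
  have hMrank : M.rank = finrank ℝ W := rfl
  rw [hrange] at hrn
  rw [hk2] at hrn
  omega

noncomputable def Kk {m l : ℕ} (Z : Matrix (Fin m) (Fin l) ℝ) :
    Submodule ℝ (EuclideanSpace ℝ (Fin l)) := LinearMap.ker (Matrix.toEuclideanLin Z)

noncomputable def Wb {m l : ℕ} (Z : Matrix (Fin m) (Fin l) ℝ) :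
    Matrix (Fin l) (Fin (finrank ℝ (Kk Z))) ℝ :=
  Matrix.of fun i a => ((stdOrthonormalBasis ℝ (Kk Z) a : Kk Z) : EuclideanSpace ℝ (Fin l)) i

lemma WtW {m l : ℕ} (Z : Matrix (Fin m) (Fin l) ℝ) : (Wb Z)ᵀ * Wb Z = 1 := by
  ext a c
  have horth := (stdOrthonormalBasis ℝ (Kk Z)).orthonormal
  rw [orthonormal_iff_ite] at horth
  have h2 := horth a c
  rw [Submodule.coe_inner, PiLp.inner_apply] at h2
  simp only [RCLike.inner_apply, conj_trivial] at h2
  simp only [Matrix.mul_apply, Matrix.transpose_apply, Wb, Matrix.of_apply, Matrix.one_apply]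
  rw [← h2]
  exact Finset.sum_congr rfl fun _ _ => mul_comm _ _

lemma ZW {m l : ℕ} (Z : Matrix (Fin m) (Fin l) ℝ) : Z * Wb Z = 0 := by
  ext i a
  have hmem : Matrix.toEuclideanLin Z
      ((stdOrthonormalBasis ℝ (Kk Z) a : Kk Z) : EuclideanSpace ℝ (Fin l)) = 0 :=
    (stdOrthonormalBasis ℝ (Kk Z) a).2
  have h0 : Z *ᵥ (fun j => Wb Z j a) = 0 := congrArg WithLp.ofLp hmem
  have h1 := congrFun h0 i
  simpa [Matrix.mul_apply, Matrix.mulVec, dotProduct] using h1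

lemma key {m l : ℕ} (σ : ℕ → ℝ) (s : ℕ) (hsl : s ≤ l)
    (hanti : ∀ i j : ℕ, 1 ≤ i → i ≤ j → σ j ≤ σ i) (hnn : ∀ i : ℕ, 1 ≤ i → 0 ≤ σ i)
    (Z : Matrix (Fin m) (Fin l) ℝ) (hZ : Z.rank ≤ s) :
    frobSq (svdDiag m l σ - svdTrunc m l s σ) ≤ frobSq (svdDiag m l σ - Z) := by
  classical
  set dd : ℕ → ℝ := fun t => if t < m then (σ (t + 1)) ^ 2 else 0 with hdd
  have hdiff : svdDiag m l σ - svdTrunc m l s σ = Matrix.of fun (i : Fin m) (j : Fin l) =>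
      if (i : ℕ) = (j : ℕ) then (if s ≤ (i : ℕ) then σ ((i : ℕ) + 1) else 0) else 0 := by
    ext i j
    simp only [svdDiag, svdTrunc, Matrix.sub_apply, Matrix.of_apply]
    by_cases h1 : (i : ℕ) = (j : ℕ)
    · by_cases h2 : (i : ℕ) < s
      · have hj2 : (j : ℕ) < s := h1 ▸ h2
        simp [h1, h2, hj2, Nat.not_le.mpr hj2]
      · have hj2 : s ≤ (j : ℕ) := h1 ▸ Nat.not_lt.mp h2
        simp [h1, h2, hj2, Nat.not_lt.mpr hj2]
    · simp [h1]
  have hLHS : frobSq (svdDiag m l σ - svdTrunc m l s σ)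
      = ∑ j : Fin l, (if s ≤ (j : ℕ) then dd (j : ℕ) else 0) := by
    rw [hdiff, frobSq_diagLike (fun t => if s ≤ t then σ (t + 1) else 0)]
    refine Finset.sum_congr rfl fun j _ => ?_
    by_cases h1 : (j : ℕ) < m <;> by_cases h2 : s ≤ (j : ℕ) <;>
      simp [hdd, h1, h2]
  have hrange : Z.rank = finrank ℝ (LinearMap.range (Matrix.toEuclideanLin Z)) := by
    rw [Matrix.toEuclideanLin_eq_toLin]
    exact Z.rank_eq_finrank_range_toLin _ _
  have hrn : finrank ℝ (LinearMap.range (Matrix.toEuclideanLin Z))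
      + finrank ℝ (Kk Z) = l := by
    have h := LinearMap.finrank_range_add_finrank_ker (Matrix.toEuclideanLin Z)
    rw [finrank_euclideanSpace, Fintype.card_fin] at h
    exact h
  have hdimK : l ≤ s + finrank ℝ (Kk Z) := by omega
  set W := Wb Z with hWdef
  set R := W * Wᵀ with hRdef
  have hWW : Wᵀ * W = 1 := WtW Z
  have hZW : Z * W = 0 := ZW Z
  have hRt : Rᵀ = R := by rw [hRdef, Matrix.transpose_mul, Matrix.transpose_transpose]
  have hRR : R * R = R := by
    rw [hRdef]
    calc W * Wᵀ * (W * Wᵀ) = W * (Wᵀ * W * Wᵀ) := by simp only [Matrix.mul_assoc]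
      _ = W * Wᵀ := by rw [hWW, Matrix.one_mul]
  have h1 : frobSq ((svdDiag m l σ - Z) * R) ≤ frobSq (svdDiag m l σ - Z) :=
    frobSq_mul_proj_le _ R hRt hRR
  have h2 : (svdDiag m l σ - Z) * R = svdDiag m l σ * R := by
    rw [Matrix.sub_mul, hRdef, ← Matrix.mul_assoc Z W Wᵀ, hZW, Matrix.zero_mul, sub_zero]
  have hDtD : (svdDiag m l σ)ᵀ * svdDiag m l σ = Matrix.of fun (i j : Fin l) =>
      if (i : ℕ) = (j : ℕ) then dd (i : ℕ) else 0 := by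
    ext i j
    rw [Matrix.mul_apply]
    have h : ∀ a : Fin m, (svdDiag m l σ)ᵀ i a * svdDiag m l σ a j
        = if (a : ℕ) = (i : ℕ) then (if (i : ℕ) = (j : ℕ) then (σ ((i : ℕ) + 1)) ^ 2 else 0)
          else 0 := by
      intro a
      simp only [svdDiag, Matrix.transpose_apply, Matrix.of_apply]
      by_cases ha : (a : ℕ) = (i : ℕ)
      · rw [if_pos ha, if_pos ha]
        by_cases hj : (a : ℕ) = (j : ℕ)
        · rw [if_pos hj, if_pos (ha.symm.trans hj), ha, sq]
        · rw [if_neg hj, if_neg (fun hc => hj (ha.symm ▸ hc)), mul_zero]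
      · rw [if_neg ha, zero_mul, if_neg ha]
    simp_rw [h, sum_fin_delta]
    simp only [Matrix.of_apply, hdd]
    by_cases h1' : (i : ℕ) < m <;> by_cases h2' : (i : ℕ) = (j : ℕ) <;> simp [h1', h2']
  have hfrobDR : frobSq (svdDiag m l σ * R) = ∑ j : Fin l, dd (j : ℕ) * R j j := by
    rw [frobSq_eq_trace]
    have e1 : (svdDiag m l σ * R)ᵀ * (svdDiag m l σ * R)
        = R * ((svdDiag m l σ)ᵀ * svdDiag m l σ * R) := by
      rw [Matrix.transpose_mul, hRt]
      simp only [Matrix.mul_assoc]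
    rw [e1, Matrix.trace_mul_comm, Matrix.mul_assoc ((svdDiag m l σ)ᵀ * svdDiag m l σ) R R, hRR]
    rw [hDtD, Matrix.trace]
    refine Finset.sum_congr rfl fun j _ => ?_
    rw [Matrix.diag_apply, Matrix.mul_apply, Finset.sum_eq_single j]
    · simp
    · intro b _ hb
      rw [Matrix.of_apply, if_neg (fun hc : (j : ℕ) = (b : ℕ) => hb (Fin.ext hc.symm)), zero_mul]
    · simp
  have hR0 : ∀ j, 0 ≤ R j j := by
    intro j
    rw [hRdef, Matrix.mul_apply]
    exact Finset.sum_nonneg fun a _ => by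
      rw [Matrix.transpose_apply]; exact mul_self_nonneg _
  have hRsym : ∀ i j, R j i = R i j := by
    intro i j
    conv_lhs => rw [← hRt]
    rw [Matrix.transpose_apply]

  have hR1 : ∀ j, R j j ≤ 1 := by
    intro j
    have h2' : R j j = ∑ i, (R i j) ^ 2 := by
      conv_lhs => rw [← hRR]
      rw [Matrix.mul_apply]
      refine Finset.sum_congr rfl fun i _ => ?_
      rw [hRsym i j, sq]
    have h3 : (R j j) ^ 2 ≤ ∑ i, (R i j) ^ 2 :=
      Finset.single_le_sum (fun i _ => sq_nonneg (R i j)) (Finset.mem_univ j)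
    nlinarith [hR0 j]
  have htr : ∑ j, R j j = (finrank ℝ (Kk Z) : ℝ) := by
    have h4 : Matrix.trace R = Matrix.trace (Wᵀ * W) := by rw [hRdef, Matrix.trace_mul_comm]
    rw [hWW, Matrix.trace_one] at h4
    have h5 : Matrix.trace R = ∑ j, R j j := rfl
    rw [← h5, h4]
    simp
  have hmaj : ∑ j : Fin l, (if s ≤ (j : ℕ) then dd (j : ℕ) else 0)
      ≤ ∑ j : Fin l, dd (j : ℕ) * R j j := by
    refine major s hsl _ _ ?_ ?_ hR0 hR1 ?_
    · intro i j hij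
      have hij' : (i : ℕ) ≤ (j : ℕ) := hij
      by_cases hj : (j : ℕ) < m
      · have hi : (i : ℕ) < m := lt_of_le_of_lt hij' hj
        simp only [hdd, if_pos hj, if_pos hi]
        have h5 : σ ((j : ℕ) + 1) ≤ σ ((i : ℕ) + 1) := hanti _ _ (by omega) (by omega)
        have h6 : 0 ≤ σ ((j : ℕ) + 1) := hnn _ (by omega)
        nlinarith
      · simp only [hdd, if_neg hj]
        by_cases hi : (i : ℕ) < m
        · simp only [if_pos hi]
          exact sq_nonneg _
        · simp [if_neg hi]
    · intro j
      simp only [hdd]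
      by_cases hj : (j : ℕ) < m
      · simp only [if_pos hj]; exact sq_nonneg _
      · simp [if_neg hj]
    · rw [htr]
      have : (l : ℝ) ≤ (s : ℝ) + (finrank ℝ (Kk Z) : ℝ) := by exact_mod_cast hdimK
      linarith
  calc frobSq (svdDiag m l σ - svdTrunc m l s σ)
      = ∑ j : Fin l, (if s ≤ (j : ℕ) then dd (j : ℕ) else 0) := hLHS
    _ ≤ ∑ j : Fin l, dd (j : ℕ) * R j j := hmaj
    _ = frobSq (svdDiag m l σ * R) := hfrobDR.symm
    _ = frobSq ((svdDiag m l σ - Z) * R) := by rw [h2]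
    _ ≤ frobSq (svdDiag m l σ - Z) := h1

end GHS

/-- **Golub–Hoffman–Stewart theorem.** Let `A = (A1 A2)` with `k = rank A1` and
`k ≤ r ≤ min {m, n}`.  Then `Ã2 = P_{A1}(A2) + H_{r-k}(P⊥_{A1}(A2))` satisfies
`rank (A1 Ã2) ≤ r` and `‖A2 − Ã2‖_F ≤ ‖A2 − X2‖_F` for every `X2` with
`rank (A1 X2) ≤ r`. -/
theorem stmt_0 {m k l : ℕ}
    (A1 : Matrix (Fin m) (Fin k) ℝ) (A2 : Matrix (Fin m) (Fin l) ℝ)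
    (r : ℕ) (hrank : A1.rank = k) (hkr : k ≤ r) (hrmn : r ≤ min m (k + l))
    (U : Matrix (Fin m) (Fin m) ℝ) (σ : ℕ → ℝ) (V : Matrix (Fin l) (Fin l) ℝ)
    (hsvd : IsSVD ((1 - projCol A1) * A2) U σ V)
    (A2t : Matrix (Fin m) (Fin l) ℝ)
    (hA2t : A2t = projCol A1 * A2 + U * svdTrunc m l (r - k) σ * Vᵀ) :
    (Matrix.fromCols A1 A2t).rank ≤ r ∧
    ∀ X2 : Matrix (Fin m) (Fin l) ℝ, (Matrix.fromCols A1 X2).rank ≤ r →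
      frob (A2 - A2t) ≤ frob (A2 - X2) := by
  classical
  obtain ⟨hPt, hPP, hPA1⟩ := GHS.projCol_props A1 hrank
  have hQA1 : (1 - projCol A1) * A1 = 0 := by
    rw [Matrix.sub_mul, Matrix.one_mul, hPA1, sub_self]
  have hrm : r ≤ m := le_trans hrmn (min_le_left _ _)
  have hrkl : r ≤ k + l := le_trans hrmn (min_le_right _ _)
  have hsl : r - k ≤ l := by omega
  constructor
  · -- rank bound
    have hsplit : Matrix.fromCols A1 A2t
        = Matrix.fromCols A1 (projCol A1 * A2)
          + Matrix.fromCols (0 : Matrix (Fin m) (Fin k) ℝ)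
            (U * svdTrunc m l (r - k) σ * Vᵀ) := by
      rw [hA2t]
      ext i j
      cases j with
      | inl j => simp [Matrix.fromCols_apply_inl]
      | inr j => simp [Matrix.fromCols_apply_inr]
    have hb1 : (Matrix.fromCols A1 (projCol A1 * A2)).rank ≤ k := by
      have hPA2 : projCol A1 * A2 = A1 * ((A1ᵀ * A1)⁻¹ * (A1ᵀ * A2)) := by
        rw [projCol]
        simp only [Matrix.mul_assoc]
      have hfc : Matrix.fromCols A1 (projCol A1 * A2)
          = A1 * Matrix.fromCols (1 : Matrix (Fin k) (Fin k) ℝ)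
            ((A1ᵀ * A1)⁻¹ * (A1ᵀ * A2)) := by
        rw [Matrix.mul_fromCols, Matrix.mul_one, ← hPA2]
      rw [hfc]
      exact le_trans (Matrix.rank_mul_le_left _ _) (le_of_eq hrank)
    have hb2 : (Matrix.fromCols (0 : Matrix (Fin m) (Fin k) ℝ)
        (U * svdTrunc m l (r - k) σ * Vᵀ)).rank ≤ r - k := by
      rw [GHS.rank_fromCols_zero_left]
      calc (U * svdTrunc m l (r - k) σ * Vᵀ).rank
          ≤ (U * svdTrunc m l (r - k) σ).rank := Matrix.rank_mul_le_left _ _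
        _ ≤ (svdTrunc m l (r - k) σ).rank := Matrix.rank_mul_le_right _ _
        _ ≤ r - k := GHS.rank_svdTrunc_le _ _ _ _
    rw [hsplit]
    have := GHS.matrix_rank_add_le (Matrix.fromCols A1 (projCol A1 * A2))
      (Matrix.fromCols (0 : Matrix (Fin m) (Fin k) ℝ) (U * svdTrunc m l (r - k) σ * Vᵀ))
    omega
  · intro X2 hX2
    apply GHS.frob_le_frob
    have hrkY : ((1 - projCol A1) * X2).rank ≤ r - k := by
      have := GHS.rank_fromCols_ge A1 X2 (1 - projCol A1) hQA1 hrank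
      omega
    have hZrank : (Uᵀ * ((1 - projCol A1) * X2) * V).rank ≤ r - k := by
      refine le_trans (Matrix.rank_mul_le_left _ _) (le_trans ?_ hrkY)
      exact Matrix.rank_mul_le_right _ _
    have hB : (1 - projCol A1) * A2 = U * svdDiag m l σ * Vᵀ := hsvd.hM
    have hL : A2 - A2t = U * (svdDiag m l σ - svdTrunc m l (r - k) σ) * Vᵀ := by
      rw [hA2t]
      have he : A2 - (projCol A1 * A2 + U * svdTrunc m l (r - k) σ * Vᵀ)
          = (1 - projCol A1) * A2 - U * svdTrunc m l (r - k) σ * Vᵀ := by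
        rw [Matrix.sub_mul, Matrix.one_mul]
        abel
      rw [he, hB, ← Matrix.sub_mul, ← Matrix.mul_sub]
    have hLfrob : GHS.frobSq (A2 - A2t)
        = GHS.frobSq (svdDiag m l σ - svdTrunc m l (r - k) σ) := by
      rw [hL, GHS.frobSq_unit_right _ V hsvd.hVl, GHS.frobSq_unit_left U _ hsvd.hUl]
    have hpyth := GHS.pythagoras (projCol A1) (A2 - X2) hPt hPP
    have hYeq : U * (Uᵀ * ((1 - projCol A1) * X2) * V) * Vᵀ = (1 - projCol A1) * X2 := by
      simp only [Matrix.mul_assoc]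
      rw [hsvd.hVr, Matrix.mul_one, ← Matrix.mul_assoc U Uᵀ ((1 - projCol A1) * X2), hsvd.hUr,
        Matrix.one_mul]
    have hQdiff : U * (svdDiag m l σ - Uᵀ * ((1 - projCol A1) * X2) * V) * Vᵀ
        = (1 - projCol A1) * (A2 - X2) := by
      rw [Matrix.mul_sub U (svdDiag m l σ), Matrix.sub_mul, hYeq, ← hB, ← Matrix.mul_sub]
    have hRfrob : GHS.frobSq ((1 - projCol A1) * (A2 - X2))
        = GHS.frobSq (svdDiag m l σ - Uᵀ * ((1 - projCol A1) * X2) * V) := by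
      rw [← hQdiff, GHS.frobSq_unit_right _ V hsvd.hVl, GHS.frobSq_unit_left U _ hsvd.hUl]
    have hkey := GHS.key σ (r - k) hsl hsvd.anti hsvd.nonneg
      (Uᵀ * ((1 - projCol A1) * X2) * V) hZrank
    have hnn := GHS.frobSq_nonneg (projCol A1 * (A2 - X2))
    rw [hLfrob]
    calc GHS.frobSq (svdDiag m l σ - svdTrunc m l (r - k) σ)
        ≤ GHS.frobSq (svdDiag m l σ - Uᵀ * ((1 - projCol A1) * X2) * V) := hkey
      _ = GHS.frobSq ((1 - projCol A1) * (A2 - X2)) := hRfrob.symm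
      _ ≤ GHS.frobSq (A2 - X2) := by rw [hpyth]; linarith
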